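/- arXiv:1707.08605 — 4 statements merged into one kernel-verified Lean document; each statement's English description precedes it below -/
import Mathlib

section
/- Let R be a commutative ring, I = (f_1, ..., f_n) an ideal, f ∈ R, and A = R[T_1,...,T_n]/(f_1T_1 + ... + f_nT_n + f) the forcing algebra. Then f ∈ I if and only if there exists a homomorphism of R-algebras from A to R. -/
open MvPolynomial

theorem forcing_algebra_section_iff_mem {R : Type*} [CommRing R] (n : ℕ)
    (f : Fin n → R) (f₀ : R) (h : MvPolynomial (Fin n) R)
    (hh : h = ∑ i, C (f i) * X i + C f₀) :
    f₀ ∈ Ideal.span (Set.range f) ↔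
      Nonempty ((MvPolynomial (Fin n) R ⧸ Ideal.span {h}) →ₐ[R] R) := by
  rw [Ideal.mem_span_range_iff_exists_fun]
  constructor
  · rintro ⟨c, hc⟩
    have hz : (aeval (fun i => -c i)) h = 0 := by
      simp only [hh, map_add, map_sum, map_mul, aeval_C, aeval_X]
      have : ∑ i, algebraMap R R (f i) * -c i = -∑ i, c i * f i := by
        rw [← Finset.sum_neg_distrib]
        exact Finset.sum_congr rfl fun i _ => by simp [Algebra.algebraMap_self]; ring
      rw [this, hc]
      simp [Algebra.algebraMap_self]
    refine ⟨Ideal.Quotient.liftₐ _ (aeval (fun i => -c i)) ?_⟩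
    intro a ha
    obtain ⟨b, rfl⟩ := Ideal.mem_span_singleton.mp ha
    simp [map_mul, hz]
  · rintro ⟨φ⟩
    set ψ := φ.comp (Ideal.Quotient.mkₐ R (Ideal.span {h})) with hψ
    have hz : ψ h = 0 := by
      have : (Ideal.Quotient.mkₐ R (Ideal.span {h})) h = 0 :=
        Ideal.Quotient.eq_zero_iff_mem.mpr (Ideal.mem_span_singleton_self h)
      simp [ψ, this]
    have hC : ∀ r : R, ψ (C r) = r := fun r => by
      simpa [Algebra.algebraMap_self] using ψ.commutes r
    rw [hh] at hz
    simp only [map_add, map_sum, map_mul, hC] at hz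
    refine ⟨fun i => -ψ (X i), ?_⟩
    have key : ∑ i, -ψ (X i) * f i = -∑ i, f i * ψ (X i) := by
      rw [← Finset.sum_neg_distrib]
      exact Finset.sum_congr rfl fun i _ => by ring
    rw [key]
    linear_combination -hz
end

section
/- Let R be a commutative ring, I = (f_1,...,f_n) an ideal, f ∈ R, and A the forcing algebra for this data. Then f belongs to the radical of I if and only if the induced morphism Spec A → Spec R is surjective, i.e., for every prime ideal p of R the fiber ring κ(p) ⊗_R A is nonzero. -/
open MvPolynomial TensorProduct

lemma key_residue {R : Type*} [CommRing R] (p : Ideal R) [p.IsPrime] (r : R) :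
    algebraMap R (IsLocalRing.ResidueField (Localization.AtPrime p)) r = 0 ↔ r ∈ p := by
  rw [IsScalarTower.algebraMap_apply R (Localization.AtPrime p)]
  show IsLocalRing.residue _ _ = 0 ↔ _
  rw [IsLocalRing.residue_eq_zero_iff]
  exact IsLocalization.AtPrime.to_map_mem_maximal_iff _ p r

set_option maxHeartbeats 1000000 in
set_option synthInstance.maxHeartbeats 400000 in
theorem forcing_algebra_radical_iff_fibers_nonzero {R : Type*} [CommRing R] (n : ℕ)
    (f : Fin n → R) (f₀ : R) (h : MvPolynomial (Fin n) R)
    (hh : h = ∑ i, C (f i) * X i + C f₀) :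
    f₀ ∈ (Ideal.span (Set.range f)).radical ↔
      ∀ (p : Ideal R) [p.IsPrime],
        Nontrivial (TensorProduct R (IsLocalRing.ResidueField (Localization.AtPrime p))
          (MvPolynomial (Fin n) R ⧸ Ideal.span {h})) := by
  constructor
  · intro hf p hp
    set K := IsLocalRing.ResidueField (Localization.AtPrime p)
    obtain ⟨x, hx⟩ : ∃ x : Fin n → K,
        (∑ i, algebraMap R K (f i) * x i) + algebraMap R K f₀ = 0 := by
      by_cases hall : ∀ i, f i ∈ p
      · refine ⟨0, ?_⟩
        have hf0 : f₀ ∈ p := by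
          have hIp : Ideal.span (Set.range f) ≤ p := by
            rw [Ideal.span_le]
            rintro _ ⟨i, rfl⟩
            exact hall i
          have := Ideal.radical_mono hIp
          rw [hp.radical] at this
          exact this hf
        simp only [Pi.zero_apply, mul_zero, Finset.sum_const_zero, zero_add]
        exact (key_residue p f₀).mpr hf0
      · push_neg at hall
        obtain ⟨i₀, hi₀⟩ := hall
        have hc : algebraMap R K (f i₀) ≠ 0 := fun hc => hi₀ ((key_residue p _).mp hc)
        refine ⟨Pi.single i₀ (-(algebraMap R K f₀) * (algebraMap R K (f i₀))⁻¹), ?_⟩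
        rw [Finset.sum_eq_single i₀]
        · rw [Pi.single_eq_same, mul_comm (-(algebraMap R K f₀)), ← mul_assoc, mul_inv_cancel₀ hc]
          ring
        · intro b _ hb; simp [Pi.single_eq_of_ne hb]
        · simp
    have haev : aeval x h = 0 := by
      rw [hh]
      simp only [map_add, map_sum, map_mul, aeval_C, aeval_X]
      exact hx
    let ψ : (MvPolynomial (Fin n) R ⧸ Ideal.span {h}) →ₐ[R] K :=
      Ideal.Quotient.liftₐ _ (aeval x) (by
        intro a ha
        obtain ⟨c, rfl⟩ := Ideal.mem_span_singleton.mp ha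
        rw [map_mul, haev, zero_mul])
    exact (Algebra.TensorProduct.productMap (AlgHom.id R K) ψ).toRingHom.domain_nontrivial
  · intro H
    by_contra hf
    rw [Ideal.radical_eq_sInf, Ideal.mem_sInf] at hf
    push_neg at hf
    obtain ⟨p, ⟨hIp, hp⟩, hf₀p⟩ := hf
    set K := IsLocalRing.ResidueField (Localization.AtPrime p) with hK
    set A := MvPolynomial (Fin n) R ⧸ Ideal.span {h} with hA
    haveI hNT : Nontrivial (K ⊗[R] A) := H p
    set mk : MvPolynomial (Fin n) R →ₐ[R] A := Ideal.Quotient.mkₐ R (Ideal.span {h}) with hmk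
    have hmkh : mk h = 0 := Ideal.Quotient.eq_zero_iff_mem.mpr (Ideal.subset_span rfl)
    have key : ∀ c : R, (1 : K) ⊗ₜ[R] (mk (C c))
        = algebraMap R K c ⊗ₜ[R] (1 : A) := by
      intro c
      have h1 : mk (C c) = algebraMap R A c := rfl
      rw [h1, ← Algebra.TensorProduct.algebraMap_apply',
        Algebra.TensorProduct.algebraMap_apply]
    have hterm : ∀ i ∈ (Finset.univ : Finset (Fin n)),
        (1 : K) ⊗ₜ[R] (mk (C (f i) * X i)) = 0 := by
      intro i _
      have hz : algebraMap R K (f i) = 0 :=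
        (key_residue p _).mpr (hIp (Ideal.subset_span ⟨i, rfl⟩))
      have h1 : mk (C (f i) * X i) = f i • mk (X i) := by
        rw [← MvPolynomial.smul_eq_C_mul, map_smul]
      rw [h1, tmul_smul, ← algebraMap_smul K (f i), hz, zero_smul]
    have h0 : algebraMap R K f₀ ⊗ₜ[R] (1 : A) = 0 := by
      have ht : (1 : K) ⊗ₜ[R] (mk h) = 0 := by rw [hmkh, tmul_zero]
      have h2 : mk h = (∑ i, mk (C (f i) * X i)) + mk (C f₀) := by
        have := congrArg mk hh
        rwa [map_add, map_sum] at this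
      rw [h2, tmul_add, tmul_sum, Finset.sum_eq_zero hterm, zero_add, key] at ht
      exact ht
    have hu : algebraMap R K f₀ ≠ 0 := fun hc => hf₀p ((key_residue p _).mp hc)
    have hone : (0 : K ⊗[R] A) = 1 := by
      calc (0 : K ⊗[R] A) = (algebraMap R K f₀)⁻¹ • (algebraMap R K f₀ ⊗ₜ[R] (1 : A)) := by
            rw [h0, smul_zero]
        _ = ((algebraMap R K f₀)⁻¹ * algebraMap R K f₀) ⊗ₜ[R] (1 : A) := by
            rw [smul_tmul', smul_eq_mul]
        _ = 1 := by rw [inv_mul_cancel₀ hu, Algebra.TensorProduct.one_def]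
    haveI : Subsingleton (K ⊗[R] A) := subsingleton_of_zero_eq_one hone
    exact false_of_nontrivial_of_subsingleton (K ⊗[R] A)
end

section
/- Let R be a Noetherian integral domain and A the homogeneous forcing algebra for data (f_{ij}), i.e., A = R[T_1,...,T_n]/(h_1,...,h_m) with h_i = f_{i1}T_1 + ... + f_{in}T_n. If the forcing equations h_1,...,h_m form a regular sequence in B = R[T_1,...,T_n], then n ≥ m and the Fitting ideal I_{min(m,n)} generated by the maximal minors of the matrix (f_{ij}) is nonzero. -/
open MvPolynomial Matrix

-- Aux 1: regular sequence of linear forms implies rows of F are R-linearly independent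
lemma rows_linearIndependent {R : Type*} [CommRing R] {m n : ℕ}
    (F : Matrix (Fin m) (Fin n) R) (h : Fin m → MvPolynomial (Fin n) R)
    (hh : ∀ i, h i = ∑ j, C (F i j) * X j)
    (hreg : RingTheory.Sequence.IsWeaklyRegular (MvPolynomial (Fin n) R) (List.ofFn h)) :
    LinearIndependent R (fun i => F i) := by
  classical
  rw [Fintype.linearIndependent_iff]
  intro g hg
  by_contra hcon
  push_neg at hcon
  -- the largest index with nonzero coefficient
  set s : Finset (Fin m) := Finset.univ.filter (fun i => g i ≠ 0) with hs
  have hsne : s.Nonempty := by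
    obtain ⟨i, hi⟩ := hcon
    exact ⟨i, by simp [hs, hi]⟩
  set k : Fin m := s.max' hsne with hk
  have hgk : g k ≠ 0 := by
    have := s.max'_mem hsne
    simpa [hs] using this
  have hgt : ∀ i, k < i → g i = 0 := by
    intro i hi
    by_contra hgi
    exact absurd (s.le_max' i (by simp [hs, hgi])) (not_le.mpr hi)
  have hg0 : ∀ j, ∑ i, g i * F i j = 0 := by
    intro j
    have := congrFun hg j
    simpa [Finset.sum_apply] using this
  have hsum : ∑ i, (C (g i) : MvPolynomial (Fin n) R) * h i = 0 := by
    simp only [hh, Finset.mul_sum]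
    rw [Finset.sum_comm]
    refine Finset.sum_eq_zero fun j _ => ?_
    have e1 : ∀ i, (C (g i) : MvPolynomial (Fin n) R) * (C (F i j) * X j) = C (g i * F i j) * X j := by
      intro i; rw [C_mul]; ring
    rw [Finset.sum_congr rfl fun i _ => e1 i, ← Finset.sum_mul, ← map_sum, hg0 j,
      map_zero, zero_mul]
  -- split sum
  have hsplit : (C (g k) : MvPolynomial (Fin n) R) * h k =
      - ∑ i ∈ Finset.univ.filter (fun i => i < k), (C (g i) : MvPolynomial (Fin n) R) * h i := by
    have h2 : ∑ i ∈ Finset.univ.filter (fun i => ¬ i < k), (C (g i) : MvPolynomial (Fin n) R) * h i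
        = C (g k) * h k := by
      refine Finset.sum_eq_single_of_mem k (by simp) ?_
      intro i hi hik
      have hki : k < i := lt_of_le_of_ne (not_lt.mp (by simpa using hi)) (Ne.symm hik)
      rw [hgt i hki, map_zero, zero_mul]
    have := Finset.sum_filter_add_sum_filter_not Finset.univ (fun i => i < k)
      (fun i => (C (g i) : MvPolynomial (Fin n) R) * h i)
    rw [hsum] at this
    rw [h2] at this
    linear_combination this
  set J : Ideal (MvPolynomial (Fin n) R) := Ideal.ofList ((List.ofFn h).take k.val) with hJ
  have hJmem : ∀ i : Fin m, i < k → h i ∈ J := by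
    intro i hik
    apply Ideal.subset_span
    show h i ∈ (List.ofFn h).take k.val
    rw [← Fin.ofFn_take_eq_take_ofFn (le_of_lt k.isLt) h]
    rw [List.mem_ofFn]
    exact ⟨⟨i.val, hik⟩, by simp [Fin.take]⟩
  have hCk : (C (g k) : MvPolynomial (Fin n) R) * h k ∈ J := by
    rw [hsplit]
    exact J.neg_mem (Ideal.sum_mem _ fun i hi =>
      J.mul_mem_left _ (hJmem i (by simpa using hi)))
  -- use regularity at index k
  have hlen : k.val < (List.ofFn h).length := by simpa using k.isLt
  have hr := hreg.regular_mod_prev k.val hlen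
  have hget : (List.ofFn h)[k.val] = h k := by simp
  rw [hget] at hr
  have hJT : J • (⊤ : Submodule (MvPolynomial (Fin n) R) (MvPolynomial (Fin n) R)) = J := by
    rw [smul_eq_mul, Ideal.mul_top]
  have hq : (Submodule.Quotient.mk (C (g k)) :
      MvPolynomial (Fin n) R ⧸ (Ideal.ofList ((List.ofFn h).take k.val) • ⊤ : Submodule (MvPolynomial (Fin n) R) (MvPolynomial (Fin n) R))) = 0 := by
    apply hr
    show h k • _ = h k • (0 : MvPolynomial (Fin n) R ⧸ _)
    rw [smul_zero, ← Submodule.Quotient.mk_smul]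
    rw [Submodule.Quotient.mk_eq_zero]
    rw [hJT]
    show h k • (C (g k) : MvPolynomial (Fin n) R) ∈ J
    rw [smul_eq_mul, mul_comm]
    exact hCk
  rw [Submodule.Quotient.mk_eq_zero, hJT] at hq
  -- constant coefficient
  have hker : J ≤ RingHom.ker (constantCoeff (R := R) (σ := Fin n)) := by
    rw [hJ]
    apply Ideal.span_le.mpr
    intro x hx
    have hx' : x ∈ List.ofFn h := List.mem_of_mem_take hx
    obtain ⟨i, rfl⟩ := List.mem_ofFn.mp hx'
    simp [RingHom.mem_ker, hh]
  have : constantCoeff (C (g k) : MvPolynomial (Fin n) R) = 0 := hker hq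
  rw [constantCoeff_C] at this
  exact hgk this

-- Aux 2: over a field, linearly independent rows give an invertible square submatrix
lemma exists_cols_det_ne_zero {K : Type*} [Field K] {m n : ℕ}
    (G : Matrix (Fin m) (Fin n) K) (hG : LinearIndependent K (fun i => G i)) :
    m ≤ n ∧ ∃ cj : Fin m → Fin n, Function.Injective cj ∧ (G.submatrix id cj).det ≠ 0 := by
  classical
  have hmn : m ≤ n := by
    have := hG.fintype_card_le_finrank
    simpa [Module.finrank_fintype_fun_eq_card] using this
  refine ⟨hmn, ?_⟩
  have hrank : G.rank = m := by simpa using hG.rank_matrix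
  have hspan : Submodule.span K (Set.range Gᵀ) = ⊤ := by
    apply Submodule.eq_top_of_finrank_eq
    rw [show Module.finrank K (Submodule.span K (Set.range Gᵀ)) = G.rank from
        (Matrix.rank_eq_finrank_span_cols G).symm, hrank, Module.finrank_fintype_fun_eq_card,
      Fintype.card_fin]
  obtain ⟨b, hbsub, hbspan, hbind⟩ := exists_linearIndependent K (Set.range Gᵀ)
  rw [hspan] at hbspan
  have hbfin : b.Finite := hbind.setFinite
  haveI := hbfin.fintype
  have hbb : Module.Basis b K (Fin m → K) :=
    Module.Basis.mk hbind (by rw [Subtype.range_coe, hbspan])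
  have hbcard : Fintype.card b = m := by
    have := Module.finrank_eq_card_basis hbb
    rw [Module.finrank_fintype_fun_eq_card, Fintype.card_fin] at this
    omega
  let e : Fin m ≃ b := (Fintype.equivFinOfCardEq hbcard).symm
  have hchoice : ∀ x : b, ∃ j, Gᵀ j = (x : Fin m → K) := fun x => hbsub x.2
  choose jf hjf using hchoice
  refine ⟨fun p => jf (e p), ?_, ?_⟩
  · intro p q hpq
    have : ((e p : b) : Fin m → K) = ((e q : b) : Fin m → K) := by
      rw [← hjf (e p), ← hjf (e q)]
      exact congrArg Gᵀ hpq
    exact e.injective (Subtype.ext this)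
  · have hcols : LinearIndependent K (fun p => (G.submatrix id (fun p => jf (e p)))ᵀ p) := by
      have heq : (fun p => (G.submatrix id (fun p => jf (e p)))ᵀ p)
          = (fun x : b => (x : Fin m → K)) ∘ e := by
        funext p
        have := hjf (e p)
        funext i
        simpa using congrFun this i
      rw [heq]
      exact hbind.comp e e.injective
    have hu := Matrix.linearIndependent_cols_iff_isUnit.mp hcols
    exact ((Matrix.isUnit_iff_isUnit_det _).mp hu).ne_zero

theorem homogeneous_forcing_regular_sequence {R : Type*} [CommRing R] [IsDomain R]
    [IsNoetherianRing R] (m n : ℕ) (F : Matrix (Fin m) (Fin n) R)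
    (h : Fin m → MvPolynomial (Fin n) R)
    (hh : ∀ i, h i = ∑ j, C (F i j) * X j)
    (hreg : RingTheory.Sequence.IsRegular (MvPolynomial (Fin n) R) (List.ofFn h)) :
    n ≥ m ∧
    Ideal.span { d : R | ∃ (ri : Fin (min m n) → Fin m) (ci : Fin (min m n) → Fin n),
      Function.Injective ri ∧ Function.Injective ci ∧ d = (F.submatrix ri ci).det } ≠ ⊥ := by
  classical
  have hind : LinearIndependent R (fun i => F i) :=
    rows_linearIndependent F h hh hreg.toIsWeaklyRegular
  let φ : (Fin n → R) →ₗ[R] (Fin n → FractionRing R) :=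
    (Algebra.linearMap R (FractionRing R)).compLeft (Fin n)
  have hφ : Function.Injective φ := by
    intro x y hxy
    funext j
    exact IsFractionRing.injective R (FractionRing R) (congrFun hxy j)
  have hindK : LinearIndependent R (fun i => (F.map (algebraMap R (FractionRing R))) i) := by
    have h2 := hind.map' φ (LinearMap.ker_eq_bot.mpr hφ)
    exact h2
  have hindK2 : LinearIndependent (FractionRing R)
      (fun i => (F.map (algebraMap R (FractionRing R))) i) :=
    (LinearIndependent.iff_fractionRing R (FractionRing R)).mp hindK
  obtain ⟨hmn, cj, hcj, hdet⟩ := exists_cols_det_ne_zero _ hindK2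
  refine ⟨hmn, ?_⟩
  have hdR : (F.submatrix id cj).det ≠ 0 := by
    intro h0
    apply hdet
    have h3 : (F.map (algebraMap R (FractionRing R))).submatrix id cj
        = (F.submatrix id cj).map (algebraMap R (FractionRing R)) := rfl
    rw [h3,
      show (F.submatrix id cj).map ⇑(algebraMap R (FractionRing R))
        = (algebraMap R (FractionRing R)).mapMatrix (F.submatrix id cj) from rfl,
      ← RingHom.map_det, h0, map_zero]
  let e : Fin (min m n) ≃ Fin m := finCongr (min_eq_left hmn)
  intro hbot
  have hmem : ((F.submatrix (⇑e) (cj ∘ ⇑e)).det : R) ∈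
      Ideal.span { d : R | ∃ (ri : Fin (min m n) → Fin m) (ci : Fin (min m n) → Fin n),
        Function.Injective ri ∧ Function.Injective ci ∧ d = (F.submatrix ri ci).det } :=
    Ideal.subset_span ⟨⇑e, cj ∘ ⇑e, e.injective, hcj.comp e.injective, rfl⟩
  rw [hbot, Ideal.mem_bot] at hmem
  apply hdR
  have h4 : (F.submatrix (⇑e) (cj ∘ ⇑e)).det = (F.submatrix id cj).det := by
    rw [show F.submatrix (⇑e) (cj ∘ ⇑e) = (F.submatrix id cj).submatrix ⇑e ⇑e from rfl]
    exact Matrix.det_submatrix_equiv_self e _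
  rw [← h4]
  exact hmem
end

section
/- Let R be a Noetherian normal domain with fraction field K, q ∈ K, and let φ: R[x] → R[q] ⊆ K be the R-algebra homomorphism sending x to q. Then: (1) if q ∉ R, the denominator ideal (R : q) = {b ∈ R : bq ∈ R} has codimension 1 in R; (2) if (R : q) = (b_1,...,b_m) with q = a_i/b_i for some a_i ∈ R, then the ideal I = {bx − a ∈ R[x] : q = a/b} is generated by b_1x − a_1, ..., b_mx − a_m; (3) ker φ = I, the ideal generated by all linear polynomials bx − a with bq = a. -/
noncomputable def idealHeight {R : Type*} [CommRing R] (I : Ideal R) : ℕ∞ :=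
  ⨅ (P : PrimeSpectrum R) (_ : I ≤ P.asIdeal), Order.height P

/-- The denominator ideal `(R : q) = {b ∈ R : bq ∈ R}` of an element `q` of the
fraction field of `R`. -/
def denomIdeal (R : Type*) [CommRing R] [IsDomain R] (q : FractionRing R) : Ideal R where
  carrier := {b : R | ∃ a : R, algebraMap R (FractionRing R) b * q = algebraMap R (FractionRing R) a}
  zero_mem' := ⟨0, by simp⟩
  add_mem' := by
    rintro x y ⟨a, ha⟩ ⟨b, hb⟩
    exact ⟨a + b, by rw [map_add, map_add, add_mul, ha, hb]⟩
  smul_mem' := by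
    rintro c x ⟨a, ha⟩
    exact ⟨c * a, by rw [smul_eq_mul, map_mul, map_mul, mul_assoc, ha]⟩

open Polynomial

section Aux

variable {R : Type*} [CommRing R] [IsDomain R]

lemma isIntegral_of_denoms [IsNoetherianRing R] (w : FractionRing R) (y : R) (hy : y ≠ 0)
    (h : ∀ n : ℕ, ∃ c : R,
      algebraMap R (FractionRing R) y * w ^ n = algebraMap R (FractionRing R) c) :
    IsIntegral R w := by
  set f := algebraMap R (FractionRing R) with hf
  have hfy : f y ≠ 0 := fun h0 => hy ((IsFractionRing.to_map_eq_zero_iff (K := FractionRing R)).mp h0)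
  set v : FractionRing R := (f y)⁻¹ with hv
  set N : Submodule R (FractionRing R) := Submodule.span R (Set.range fun n : ℕ => w ^ n) with hN
  have hle : N ≤ Submodule.span R {v} := by
    rw [hN, Submodule.span_le]
    rintro _ ⟨n, rfl⟩
    obtain ⟨c, hc⟩ := h n
    refine Submodule.mem_span_singleton.mpr ⟨c, ?_⟩
    rw [Algebra.smul_def, hv]
    field_simp
    rw [← hc]
  have hfg : N.FG := by
    haveI : IsNoetherian R (Submodule.span R {v}) :=
      isNoetherian_of_fg_of_noetherian _ (Submodule.fg_span_singleton v)
    have heq : Submodule.map (Submodule.span R {v}).subtype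
        (Submodule.comap (Submodule.span R {v}).subtype N) = N := by
      rw [Submodule.map_comap_subtype, inf_eq_right.mpr hle]
    rw [← heq]
    exact (IsNoetherian.noetherian _).map _
  have hbot : N ≠ ⊥ := by
    intro h0
    have h1 : (1 : FractionRing R) ∈ N := Submodule.subset_span ⟨0, pow_zero w⟩
    rw [h0, Submodule.mem_bot] at h1
    exact one_ne_zero h1
  refine isIntegral_of_smul_mem_submodule N hbot hfg w ?_
  intro n hn
  induction hn using Submodule.span_induction with
  | mem z hz => obtain ⟨k, rfl⟩ := hz; exact Submodule.subset_span ⟨k + 1, by simp [pow_succ, smul_eq_mul]; ring⟩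
  | zero => simp
  | add a b _ _ ha hb => rw [smul_add]; exact N.add_mem ha hb
  | smul r a _ ha => rw [smul_comm]; exact N.smul_mem r ha


lemma mem_denomIdeal {q : FractionRing R} {b : R} :
    b ∈ denomIdeal R q ↔ ∃ a : R,
      algebraMap R (FractionRing R) b * q = algebraMap R (FractionRing R) a := Iff.rfl

lemma denomIdeal_height_aux [IsIntegrallyClosed R] [IsNoetherianRing R] (q : FractionRing R)
    (hq : q ∉ (algebraMap R (FractionRing R)).range) :
    ∃ P : Ideal R, P.IsPrime ∧ denomIdeal R q ≤ P ∧
      ∀ Q : Ideal R, Q.IsPrime → Q < P → Q = ⊥ := by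
  set f := algebraMap R (FractionRing R) with hfdef
  have finj : Function.Injective f := IsFractionRing.injective R (FractionRing R)
  -- the set of denominator ideals of non-elements, above denomIdeal q
  set S : Set (Ideal R) := {J | (∃ x : FractionRing R, x ∉ f.range ∧ J = denomIdeal R x) ∧
      denomIdeal R q ≤ J} with hS
  have hSne : S.Nonempty := ⟨denomIdeal R q, ⟨q, hq, rfl⟩, le_refl _⟩
  obtain ⟨P, hPS, hPmax⟩ := set_has_maximal_iff_noetherian.mpr
    (inferInstance : IsNoetherian R R) S hSne
  obtain ⟨⟨x, hx, hPx⟩, hqP⟩ := hPS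
  -- basic facts
  have hmemP : ∀ {b : R}, b ∈ P ↔ ∃ a : R, f b * x = f a := by
    intro b; rw [hPx]; exact Iff.rfl
  have hPbot : P ≠ ⊥ := by
    obtain ⟨⟨a, s⟩, hs⟩ := IsLocalization.surj (nonZeroDivisors R) q
    intro h0
    have hsD : (s : R) ∈ denomIdeal R q := ⟨a, by rw [mul_comm]; exact hs⟩
    have := hqP hsD
    rw [h0, Ideal.mem_bot] at this
    exact nonZeroDivisors.ne_zero s.2 this
  -- P is prime
  have hPprime : Ideal.IsPrime P := by
    constructor
    · intro h0
      have h1 : (1 : R) ∈ P := h0 ▸ Submodule.mem_top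
      obtain ⟨a, ha⟩ := hmemP.mp h1
      exact hx ⟨a, by rw [← ha, map_one, one_mul]⟩
    · intro a b hab
      by_cases hb : b ∈ P
      · exact Or.inr hb
      · left
        have hx' : f b * x ∉ f.range := by
          rintro ⟨r, hr⟩
          exact hb (hmemP.mpr ⟨r, hr.symm⟩)
        have hle : P ≤ denomIdeal R (f b * x) := by
          intro c hc
          obtain ⟨r, hr⟩ := hmemP.mp hc
          exact ⟨b * r, by show f c * (f b * x) = f (b * r); rw [mul_left_comm, hr, ← map_mul]⟩
        have hmem : denomIdeal R (f b * x) ∈ S := ⟨⟨_, hx', rfl⟩, le_trans hqP hle⟩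
        have hPeq : P = denomIdeal R (f b * x) :=
          eq_of_le_of_not_lt hle (hPmax _ hmem)
        obtain ⟨r, hr⟩ := hmemP.mp hab
        rw [hPeq]
        exact ⟨r, by show f a * (f b * x) = f r; rw [← mul_assoc, ← map_mul, hr]⟩
  -- find t ∈ P with x * t = u ∉ P
  have key : ∃ t u : R, t ∈ P ∧ u ∉ P ∧ f t * x = f u := by
    by_contra hcon
    push_neg at hcon
    -- then x • (image of P) ⊆ image of P, so x is integral, so x ∈ R
    apply hx
    rw [hfdef, RingHom.mem_range]
    apply IsIntegrallyClosed.isIntegral_iff.mp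
    set N : Submodule R (FractionRing R) := P.map (Algebra.linearMap R (FractionRing R)) with hN
    have hNbot : N ≠ ⊥ := by
      obtain ⟨p0, hp0P, hp0⟩ := Submodule.exists_mem_ne_zero_of_ne_bot hPbot
      intro h0
      have : f p0 ∈ N := Submodule.mem_map_of_mem hp0P
      rw [h0, Submodule.mem_bot] at this
      exact hp0 (finj (by rw [this, map_zero]))
    have hNfg : N.FG := (IsNoetherian.noetherian P).map _
    refine isIntegral_of_smul_mem_submodule N hNbot hNfg x ?_
    rintro _ ⟨t, ht, rfl⟩
    obtain ⟨u, hu⟩ := hmemP.mp ht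
    have huP : u ∈ P := by
      by_contra huP
      exact hcon t u ht huP hu
    refine ⟨u, huP, ?_⟩
    show f u = x • f t
    rw [smul_eq_mul, mul_comm, hu]
  obtain ⟨t, u, htP, huP, htu⟩ := key
  have htne : t ≠ 0 := by
    rintro rfl
    rw [map_zero, zero_mul] at htu
    have hu0 : u = 0 := finj (by rw [map_zero, ← htu])
    exact huP (hu0 ▸ P.zero_mem)
  have hft : f t ≠ 0 := fun h0 => htne ((IsFractionRing.to_map_eq_zero_iff (K := FractionRing R)).mp h0)
  -- key multiplication identity
  have hmul : ∀ s ∈ P, ∃ c : R, s * u = t * c := by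
    intro s hs
    obtain ⟨c, hc⟩ := hmemP.mp hs
    refine ⟨c, finj ?_⟩
    rw [map_mul, map_mul, ← htu, ← hc]; ring
  refine ⟨P, hPprime, hqP, ?_⟩
  intro Q hQ hQP
  -- t ∉ Q
  have htQ : t ∉ Q := by
    intro htQ
    refine absurd hQP (not_lt_of_ge ?_)
    intro s hs
    obtain ⟨c, hc⟩ := hmul s hs
    have hsu : s * u ∈ Q := hc ▸ Q.mul_mem_right c htQ
    exact (hQ.mem_or_mem hsu).resolve_right (fun h => huP (le_of_lt hQP h))
  -- every element of Q is zero
  have hstep : ∀ z ∈ Q, ∃ z' ∈ Q, z * u = t * z' := by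
    intro z hz
    obtain ⟨c, hc⟩ := hmul z (le_of_lt hQP hz)
    refine ⟨c, ?_, hc⟩
    have : t * c ∈ Q := hc ▸ Q.mul_mem_right u hz
    exact (hQ.mem_or_mem this).resolve_left htQ
  rw [eq_bot_iff]
  intro y hy
  rw [Ideal.mem_bot]
  by_contra hyne
  -- construct the sequence c n with f y * (f u / f t) ^ n = f (c n)
  set w : FractionRing R := f u * (f t)⁻¹ with hw
  let step : {z : R // z ∈ Q} → {z : R // z ∈ Q} := fun z =>
    ⟨(hstep z.1 z.2).choose, (hstep z.1 z.2).choose_spec.1⟩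
  have hstepmul : ∀ z : {z : R // z ∈ Q}, (z : R) * u = t * (step z : R) := fun z =>
    (hstep z.1 z.2).choose_spec.2
  let c : ℕ → {z : R // z ∈ Q} := fun n => step^[n] ⟨y, hy⟩
  have hkey : ∀ n : ℕ, f y * w ^ n = f (c n).1 := by
    intro n
    induction n with
    | zero => simp only [pow_zero, mul_one]; rfl
    | succ n ih =>
      have hc : (c (n+1) : R) = (step (c n) : R) := by
        show (step^[n+1] ⟨y, hy⟩ : R) = _
        rw [Function.iterate_succ_apply']
      have hmu : (c n : R) * u = t * (c (n+1) : R) := hc ▸ hstepmul (c n)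
      have : f ((c n : R)) * f u = f t * f ((c (n+1) : R)) := by
        rw [← map_mul, ← map_mul, hmu]
      rw [pow_succ, ← mul_assoc, ih, hw, ← mul_assoc, this]
      field_simp
  -- w is integral, hence in R, contradiction
  obtain ⟨r, hr⟩ := IsIntegrallyClosed.isIntegral_iff.mp
    (isIntegral_of_denoms w y hyne (fun n => ⟨(c n).1, hkey n⟩))
  apply huP
  have hur : u = r * t := by
    apply finj
    rw [map_mul]
    have : (algebraMap R (FractionRing R)) r = w := hr
    rw [this, hw, mul_assoc, inv_mul_cancel₀ hft, mul_one]
  rw [hur, ← smul_eq_mul]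
  exact P.smul_mem r htP


lemma denomIdeal_ne_bot (q : FractionRing R) : denomIdeal R q ≠ ⊥ := by
  obtain ⟨⟨a, s⟩, hs⟩ := IsLocalization.surj (nonZeroDivisors R) q
  intro h0
  have hsD : (s : R) ∈ denomIdeal R q := ⟨a, by rw [mul_comm]; exact hs⟩
  rw [h0, Ideal.mem_bot] at hsD
  exact nonZeroDivisors.ne_zero s.2 hsD

lemma denomIdeal_height [IsIntegrallyClosed R] [IsNoetherianRing R] (q : FractionRing R)
    (hq : q ∉ (algebraMap R (FractionRing R)).range) : idealHeight (denomIdeal R q) = 1 := by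
  obtain ⟨P, hP, hqP, hmin⟩ := denomIdeal_height_aux q hq
  apply le_antisymm
  · refine le_trans (iInf₂_le (⟨P, hP⟩ : PrimeSpectrum R) hqP) ?_
    rw [show (1 : ℕ∞) = ((1 : ℕ) : ℕ∞) from rfl, Order.height_le_coe_iff]
    intro Q hQ
    have hQbot : Q = ⊥ := by
      have := hmin Q.asIdeal Q.2 ((PrimeSpectrum.asIdeal_lt_asIdeal _ _).mpr hQ)
      exact PrimeSpectrum.ext this
    rw [hQbot, Order.height_bot]
    exact zero_lt_one
  · refine le_iInf₂ fun P' hP' => ?_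
    rw [ENat.one_le_iff_ne_zero, Ne, Order.height_eq_zero, isMin_iff_eq_bot]
    intro h0
    have : P'.asIdeal = ⊥ := by rw [h0]; rfl
    exact denomIdeal_ne_bot q (le_bot_iff.mp (this ▸ hP'))


-- Part (2)
lemma part2 (q : FractionRing R) (I : Ideal (Polynomial R))
    (hI : I = Ideal.span {p : Polynomial R | ∃ a b : R,
      algebraMap R (FractionRing R) b * q = algebraMap R (FractionRing R) a ∧
      p = Polynomial.C b * Polynomial.X - Polynomial.C a})
    (m : ℕ) (b a : Fin m → R)
    (hspan : denomIdeal R q = Ideal.span (Set.range b))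
    (ha : ∀ i, algebraMap R (FractionRing R) (b i) * q = algebraMap R (FractionRing R) (a i)) :
    I = Ideal.span (Set.range fun i => Polynomial.C (b i) * Polynomial.X - Polynomial.C (a i)) := by
  have finj : Function.Injective (algebraMap R (FractionRing R)) :=
    IsFractionRing.injective R (FractionRing R)
  rw [hI]
  apply le_antisymm
  · rw [Ideal.span_le]
    rintro p ⟨a', b', hab', rfl⟩
    -- b' ∈ denomIdeal
    have hb' : b' ∈ Ideal.span (Set.range b) := by
      rw [← hspan]; exact ⟨a', hab'⟩
    obtain ⟨c, hc⟩ := (Submodule.mem_span_range_iff_exists_fun R).mp hb'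
    have hae : a' = ∑ i, c i * a i := by
      apply finj
      rw [← hab', ← hc, map_sum, Finset.sum_mul, map_sum]
      refine Finset.sum_congr rfl fun i _ => ?_
      rw [smul_eq_mul, map_mul, map_mul, mul_assoc, ha i]
    have hpe : C b' * X - C a' =
        ∑ i, C (c i) * (C (b i) * X - C (a i)) := by
      rw [hae, ← hc]
      rw [map_sum (C : R →+* R[X]) _ Finset.univ, map_sum (C : R →+* R[X]) _ Finset.univ,
        Finset.sum_mul, ← Finset.sum_sub_distrib]
      refine Finset.sum_congr rfl fun i _ => ?_
      simp only [smul_eq_mul, C_mul]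
      ring
    rw [hpe]
    exact Ideal.sum_mem _ fun i _ => Ideal.mul_mem_left _ _
      (Ideal.subset_span ⟨i, rfl⟩)
  · rw [Ideal.span_le]
    rintro p ⟨i, rfl⟩
    exact Ideal.subset_span ⟨a i, b i, ha i, rfl⟩

-- Part (3)
lemma part3 [IsIntegrallyClosed R] [IsNoetherianRing R] (q : FractionRing R)
    (I : Ideal (Polynomial R))
    (hI : I = Ideal.span {p : Polynomial R | ∃ a b : R,
      algebraMap R (FractionRing R) b * q = algebraMap R (FractionRing R) a ∧
      p = Polynomial.C b * Polynomial.X - Polynomial.C a}) :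
    RingHom.ker (Polynomial.aeval (R := R) q) = I := by
  have finj : Function.Injective (algebraMap R (FractionRing R)) :=
    IsFractionRing.injective R (FractionRing R)
  apply le_antisymm
  · -- the hard direction: ker ⊆ I, by induction on degree
    intro p hp
    rw [RingHom.mem_ker] at hp
    have main : ∀ (n : ℕ) (p : Polynomial R), p.natDegree ≤ n → aeval q p = 0 → p ∈ I := by
      intro n
      induction n with
      | zero =>
        intro p hdeg hval
        rw [Polynomial.eq_C_of_natDegree_le_zero hdeg] at hval ⊢
        rw [aeval_C] at hval
        have : p.coeff 0 = 0 := (IsFractionRing.to_map_eq_zero_iff (K := FractionRing R)).mp hval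
        rw [this, map_zero]
        exact I.zero_mem
      | succ n ih =>
        intro p hdeg hval
        by_cases hdeg' : p.natDegree ≤ n
        · exact ih p hdeg' hval
        · have hdeg'' : p.natDegree = n + 1 := le_antisymm hdeg (not_le.mp hdeg')
          have hpne : p ≠ 0 := fun h => by simp [h] at hdeg''
          -- leading coefficient times q is integral
          obtain ⟨a, hA⟩ := IsIntegrallyClosed.isIntegral_iff.mp
            (isIntegral_leadingCoeff_smul p q hval)
          rw [Algebra.smul_def] at hA
          set v := p.leadingCoeff with hv
          have hgen : C v * X - C a ∈ I := by
            rw [hI]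
            exact Ideal.subset_span ⟨a, v, hA.symm, rfl⟩
          set p' := p - (C v * X - C a) * X ^ n with hp'
          have hval' : aeval q p' = 0 := by
            rw [hp']
            simp only [map_sub, map_mul, hval, aeval_X_pow, aeval_X, aeval_C]
            rw [hA]
            ring
          have hdeg3 : p'.natDegree ≤ n := by
            rw [hp']
            rw [Polynomial.natDegree_le_iff_coeff_eq_zero]
            intro N hN
            have hNn : n + 1 ≤ N := hN
            have h1 : (C v * X - C a) * X ^ n = C v * X ^ (n + 1) - C a * X ^ n := by ring
            rw [h1, Polynomial.coeff_sub, Polynomial.coeff_sub, Polynomial.coeff_C_mul,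
              Polynomial.coeff_C_mul, Polynomial.coeff_X_pow, Polynomial.coeff_X_pow]
            rcases eq_or_lt_of_le hNn with h | h
            · rw [← h, if_pos rfl, if_neg (by omega), mul_one, mul_zero, sub_zero, hv,
                ← hdeg'', Polynomial.coeff_natDegree, sub_self]
            · have h2 : p.coeff N = 0 :=
                Polynomial.coeff_eq_zero_of_natDegree_lt (by omega)
              rw [h2, if_neg (by omega), if_neg (by omega), mul_zero, mul_zero,
                sub_zero, sub_zero]
          have hp'I : p' ∈ I := ih p' hdeg3 hval'
          have : p = p' + (C v * X - C a) * X ^ n := by rw [hp']; ring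
          rw [this]
          exact I.add_mem hp'I (I.mul_mem_right _ hgen)
    exact main p.natDegree p le_rfl hp
  · rw [hI, Ideal.span_le]
    rintro p ⟨a, b, hab, rfl⟩
    rw [SetLike.mem_coe, RingHom.mem_ker]
    simp only [map_sub, map_mul, aeval_X, aeval_C]
    rw [hab]
    ring

end Aux

theorem denominator_ideal_theorem {R : Type*} [CommRing R] [IsDomain R]
    [IsIntegrallyClosed R] [IsNoetherianRing R] (q : FractionRing R)
    (I : Ideal (Polynomial R))
    (hI : I = Ideal.span {p : Polynomial R | ∃ a b : R,
      algebraMap R (FractionRing R) b * q = algebraMap R (FractionRing R) a ∧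
      p = Polynomial.C b * Polynomial.X - Polynomial.C a}) :
    (q ∉ (algebraMap R (FractionRing R)).range → idealHeight (denomIdeal R q) = 1) ∧
    (∀ (m : ℕ) (b a : Fin m → R),
      denomIdeal R q = Ideal.span (Set.range b) →
      (∀ i, algebraMap R (FractionRing R) (b i) * q = algebraMap R (FractionRing R) (a i)) →
      I = Ideal.span (Set.range fun i => Polynomial.C (b i) * Polynomial.X - Polynomial.C (a i))) ∧
    RingHom.ker (Polynomial.aeval (R := R) q) = I := by
  exact ⟨fun hq => denomIdeal_height q hq,
    fun m b a hspan ha => part2 q I hI m b a hspan ha,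
    part3 q I hI⟩
end
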